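/- Proposition (SRI vs. symmetrized reference-invariant GE, case α > 1): for every real α > 1, α·SR_α(p̄, q̄) ≤ α·SD_α(p̄, q̄), where p̄_j = p_j/Σ_k p_k, q̄_j = q_j/Σ_k q_k, and r̄_j = q̄_j/p̄_j. -/
import Mathlib


/-- Symmetrized Rényi index on the normalized distributions
`p̄_j = p_j/Σ p`, `q̄_j = q_j/Σ q`, `r̄_j = q̄_j/p̄_j`:
`SR_α(p̄,q̄) = −(1/(2α(1−α)))·ln[(Σ_j p̄_j r̄_j^{1−α})·(Σ_j p̄_j r̄_j^{α})]`. -/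
noncomputable def symRenyiBar (m : ℕ) (α : ℝ) (p q : Fin m → ℝ) : ℝ :=
  -(1 / (2 * α * (1 - α))) *
    Real.log
      ((∑ j, (p j / ∑ k, p k) * ((q j / ∑ k, q k) / (p j / ∑ k, p k)) ^ (1 - α)) *
       (∑ j, (p j / ∑ k, p k) * ((q j / ∑ k, q k) / (p j / ∑ k, p k)) ^ α))

/-- Symmetrized reference-invariant GE index on the normalized distributions:
`SD_α(p̄,q̄) = (1/(α(1−α))) · [1 − (1/2) Σ_j p̄_j (r̄_j^{1−α} + r̄_j^{α})]`. -/
noncomputable def symGEBar (m : ℕ) (α : ℝ) (p q : Fin m → ℝ) : ℝ :=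
  (1 / (α * (1 - α))) *
    (1 - (1 / 2) * ∑ j, (p j / ∑ k, p k) *
      (((q j / ∑ k, q k) / (p j / ∑ k, p k)) ^ (1 - α) +
       ((q j / ∑ k, q k) / (p j / ∑ k, p k)) ^ α))

/-- SRI vs. symmetrized reference-invariant GE, case `α > 1`:
`α·SR_α(p̄,q̄) ≤ α·SD_α(p̄,q̄)`. -/
theorem symRenyiBar_le_symGEBar (m : ℕ) (hm : 1 ≤ m) (p q : Fin m → ℝ)
    (hp : ∀ j, 0 < p j) (hq : ∀ j, 0 < q j)
    (α : ℝ) (hα : 1 < α) :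
    α * symRenyiBar m α p q ≤ α * symGEBar m α p q := by
  have hmne : (Finset.univ : Finset (Fin m)).Nonempty := by
    have : Nonempty (Fin m) := Fin.pos_iff_nonempty.mp (by omega)
    exact Finset.univ_nonempty
  have hpsum : 0 < ∑ k, p k := Finset.sum_pos (fun j _ => hp j) hmne
  have hqsum : 0 < ∑ k, q k := Finset.sum_pos (fun j _ => hq j) hmne
  have hterm : ∀ j : Fin m, 0 < (p j / ∑ k, p k) := fun j => div_pos (hp j) hpsum
  have hr : ∀ j : Fin m, 0 < ((q j / ∑ k, q k) / (p j / ∑ k, p k)) :=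
    fun j => div_pos (div_pos (hq j) hqsum) (hterm j)
  have hA : 0 < ∑ j, (p j / ∑ k, p k) * ((q j / ∑ k, q k) / (p j / ∑ k, p k)) ^ (1 - α) :=
    Finset.sum_pos (fun j _ => mul_pos (hterm j) (Real.rpow_pos_of_pos (hr j) _)) hmne
  have hB : 0 < ∑ j, (p j / ∑ k, p k) * ((q j / ∑ k, q k) / (p j / ∑ k, p k)) ^ α :=
    Finset.sum_pos (fun j _ => mul_pos (hterm j) (Real.rpow_pos_of_pos (hr j) _)) hmne
  simp only [symRenyiBar, symGEBar, mul_add, Finset.sum_add_distrib]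
  set A := ∑ j, (p j / ∑ k, p k) * ((q j / ∑ k, q k) / (p j / ∑ k, p k)) ^ (1 - α) with hAdef
  set B := ∑ j, (p j / ∑ k, p k) * ((q j / ∑ k, q k) / (p j / ∑ k, p k)) ^ α with hBdef
  have key : Real.log (A * B) ≤ A + B - 2 := by
    rw [Real.log_mul (ne_of_gt hA) (ne_of_gt hB)]
    have h1 := Real.log_le_sub_one_of_pos hA
    have h2 := Real.log_le_sub_one_of_pos hB
    linarith
  have hαne : α ≠ 0 := by linarith
  have h1αne : (1 : ℝ) - α ≠ 0 := by linarith
  have hne : α - 1 ≠ 0 := by linarith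
  have hcpos : (0 : ℝ) < 1 / (2 * (α - 1)) := by
    apply one_div_pos.mpr; linarith
  have e1 : α * (-(1 / (2 * α * (1 - α))) * Real.log (A * B))
      = Real.log (A * B) * (1 / (2 * (α - 1))) := by
    field_simp
    ring
  have e2 : α * (1 / (α * (1 - α)) * (1 - (1 / 2 * A + 1 / 2 * B)))
      = (A + B - 2) * (1 / (2 * (α - 1))) := by
    field_simp
    ring
  rw [e1, e2]
  exact mul_le_mul_of_nonneg_right key (le_of_lt hcpos)
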